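/- (Curvature of the optimal-price function.) In the binary monopoly model with D_L and D_H three times continuously differentiable: if R_L'''(p) ≥ 0, R_H'''(p) ≥ 0 and R_H''(p) ≥ R_L''(p) for all p ∈ (p_L*, p_H*), then p''(μ) ≥ 0 for all μ ∈ (0,1) (the optimal-price function is convex on [0,1]); if instead R_L'''(p) ≤ 0, R_H'''(p) ≤ 0 and R_H''(p) ≤ R_L''(p) for all p ∈ (p_L*, p_H*), then p''(μ) ≤ 0 for all μ ∈ (0,1) (the optimal-price function is concave on [0,1]). -/

import Mathlib

set_option maxHeartbeats 1000000


/-- (Curvature of the optimal-price function.) In the binary monopoly model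
with `D_L, D_H` three times continuously differentiable: if `R_L''' ≥ 0`, `R_H''' ≥ 0` and
`R_H'' ≥ R_L''` on `(p_L*, p_H*)` then the optimal-price function is convex
(`p'' ≥ 0` on `(0,1)`); if the opposite inequalities hold then it is concave. -/
theorem stmt_7
    (I : Set ℝ) (DL DH RL RH : ℝ → ℝ) (pLs pHs : ℝ)
    (hIopen : IsOpen I) (hIconv : Convex ℝ I) (hIpos : I ⊆ Set.Ioi (0:ℝ))
    (hRL : RL = fun q => q * DL q) (hRH : RH = fun q => q * DH q)
    (hDL : ContDiffOn ℝ 3 DL I) (hDH : ContDiffOn ℝ 3 DH I)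
    (hDLpos : ∀ q ∈ I, 0 < DL q) (hDHpos : ∀ q ∈ I, 0 < DH q)
    (hDL' : ∀ q ∈ I, deriv DL q < 0) (hDH' : ∀ q ∈ I, deriv DH q < 0)
    (hRL'' : ∀ q ∈ I, deriv (deriv RL) q < 0) (hRH'' : ∀ q ∈ I, deriv (deriv RH) q < 0)
    (hpLs : pLs ∈ I) (hpHs : pHs ∈ I) (hlt : pLs < pHs)
    (hRL' : deriv RL pLs = 0) (hRH' : deriv RH pHs = 0)
    (p : ℝ → ℝ)
    (hp : ∀ μ ∈ Set.Icc (0:ℝ) 1, p μ ∈ Set.Icc pLs pHs ∧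
      (1 - μ) * deriv RL (p μ) + μ * deriv RH (p μ) = 0) :
    ((∀ q ∈ Set.Ioo pLs pHs,
        0 ≤ deriv (deriv (deriv RL)) q ∧ 0 ≤ deriv (deriv (deriv RH)) q ∧
          deriv (deriv RL) q ≤ deriv (deriv RH) q) →
      (∀ μ ∈ Set.Ioo (0:ℝ) 1, 0 ≤ deriv (deriv p) μ) ∧
        ConvexOn ℝ (Set.Icc (0:ℝ) 1) p) ∧
    ((∀ q ∈ Set.Ioo pLs pHs,
        deriv (deriv (deriv RL)) q ≤ 0 ∧ deriv (deriv (deriv RH)) q ≤ 0 ∧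
          deriv (deriv RH) q ≤ deriv (deriv RL) q) →
      (∀ μ ∈ Set.Ioo (0:ℝ) 1, deriv (deriv p) μ ≤ 0) ∧
        ConcaveOn ℝ (Set.Icc (0:ℝ) 1) p) := by
  have hIccI : Set.Icc pLs pHs ⊆ I := hIconv.ordConnected.out hpLs hpHs
  set g := deriv RL with hgdef
  set h := deriv RH with hhdef
  set g1 := deriv g with hg1def
  set h1 := deriv h with hh1def
  set g2 := deriv g1 with hg2def
  set h2 := deriv h1 with hh2def
  -- smoothness
  have hRLc : ContDiffOn ℝ 3 RL I := by rw [hRL]; exact contDiffOn_id.mul hDL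
  have hRHc : ContDiffOn ℝ 3 RH I := by rw [hRH]; exact contDiffOn_id.mul hDH
  have hgc : ContDiffOn ℝ 2 g I := hRLc.deriv_of_isOpen hIopen (by norm_num)
  have hhc : ContDiffOn ℝ 2 h I := hRHc.deriv_of_isOpen hIopen (by norm_num)
  have hg1c : ContDiffOn ℝ 1 g1 I := hgc.deriv_of_isOpen hIopen (by norm_num)
  have hh1c : ContDiffOn ℝ 1 h1 I := hhc.deriv_of_isOpen hIopen (by norm_num)
  have hgd : ∀ q ∈ I, HasDerivAt g (g1 q) q := fun q hq =>
    ((hgc.differentiableOn (by norm_num) q hq).differentiableAt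
      (hIopen.mem_nhds hq)).hasDerivAt
  have hhd : ∀ q ∈ I, HasDerivAt h (h1 q) q := fun q hq =>
    ((hhc.differentiableOn (by norm_num) q hq).differentiableAt
      (hIopen.mem_nhds hq)).hasDerivAt
  have hg1d : ∀ q ∈ I, HasDerivAt g1 (g2 q) q := fun q hq =>
    ((hg1c.differentiableOn (by norm_num) q hq).differentiableAt
      (hIopen.mem_nhds hq)).hasDerivAt
  have hh1d : ∀ q ∈ I, HasDerivAt h1 (h2 q) q := fun q hq =>
    ((hh1c.differentiableOn (by norm_num) q hq).differentiableAt
      (hIopen.mem_nhds hq)).hasDerivAt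
  -- strict antitonicity of g, h on I
  have hganti : StrictAntiOn g I := strictAntiOn_of_deriv_neg hIconv
    (fun q hq => (hgd q hq).continuousAt.continuousWithinAt)
    (by rw [hIopen.interior_eq]; exact hRL'')
  have hhanti : StrictAntiOn h I := strictAntiOn_of_deriv_neg hIconv
    (fun q hq => (hhd q hq).continuousAt.continuousWithinAt)
    (by rw [hIopen.interior_eq]; exact hRH'')
  have hgneg : ∀ q ∈ Set.Icc pLs pHs, pLs < q → g q < 0 := fun q hq h0 => by
    have := hganti hpLs (hIccI hq) h0
    rwa [hRL'] at this
  have hhpos : ∀ q ∈ Set.Icc pLs pHs, q < pHs → 0 < h q := fun q hq h0 => by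
    have := hhanti (hIccI hq) hpHs h0
    rwa [hRH'] at this
  have hgle : ∀ q ∈ Set.Icc pLs pHs, g q ≤ 0 := fun q hq => by
    rcases eq_or_lt_of_le hq.1 with h0 | h0
    · rw [← h0, hRL']
    · exact (hgneg q hq h0).le
  have hhge : ∀ q ∈ Set.Icc pLs pHs, 0 ≤ h q := fun q hq => by
    rcases eq_or_lt_of_le hq.2 with h0 | h0
    · rw [h0, hRH']
    · exact (hhpos q hq h0).le
  have hgmh : ∀ q ∈ Set.Icc pLs pHs, g q - h q < 0 := fun q hq => by
    rcases eq_or_lt_of_le hq.1 with h0 | h0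
    · have hhq := hhpos q hq (h0 ▸ hlt)
      have hgq : g q = 0 := by rw [← h0]; exact hRL'
      linarith
    · have := hgneg q hq h0
      have := hhge q hq
      linarith
  -- the inverse function m and its derivative M1
  set m : ℝ → ℝ := fun q => g q / (g q - h q) with hmdef
  set M1 : ℝ → ℝ := fun q => (g q * h1 q - g1 q * h q) / (g q - h q) ^ 2 with hM1def
  have hppt : ∀ μ ∈ Set.Icc (0:ℝ) 1, p μ ∈ Set.Icc pLs pHs := fun μ hμ => (hp μ hμ).1
  have heq : ∀ μ ∈ Set.Icc (0:ℝ) 1, (1 - μ) * g (p μ) + μ * h (p μ) = 0 :=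
    fun μ hμ => (hp μ hμ).2
  have hm01 : ∀ q ∈ Set.Icc pLs pHs, m q ∈ Set.Icc (0:ℝ) 1 := fun q hq => by
    have h1' := hgmh q hq
    have h2' := hgle q hq
    have h3' := hhge q hq
    constructor
    · show (0:ℝ) ≤ g q / (g q - h q)
      rw [le_div_iff_of_neg h1']
      nlinarith
    · show g q / (g q - h q) ≤ 1
      rw [div_le_iff_of_neg h1']
      nlinarith
  have hmp : ∀ μ ∈ Set.Icc (0:ℝ) 1, m (p μ) = μ := fun μ hμ => by
    have h1' := heq μ hμ
    have h2' := hgmh _ (hppt μ hμ)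
    show g (p μ) / (g (p μ) - h (p μ)) = μ
    rw [div_eq_iff h2'.ne]
    linarith
  -- uniqueness of the zero: strict antitonicity of the FOC in q
  have hFanti : ∀ μ ∈ Set.Icc (0:ℝ) 1,
      StrictAntiOn (fun x => (1 - μ) * g x + μ * h x) I := fun μ hμ => by
    apply strictAntiOn_of_deriv_neg hIconv
    · exact fun x hx =>
        (((hgd x hx).const_mul (1 - μ)).add ((hhd x hx).const_mul μ)).continuousAt.continuousWithinAt
    · intro x hx
      rw [hIopen.interior_eq] at hx
      have hadd : HasDerivAt (fun x => (1 - μ) * g x + μ * h x) ((1 - μ) * g1 x + μ * h1 x) x :=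
        ((hgd x hx).const_mul (1 - μ)).add ((hhd x hx).const_mul μ)
      rw [hadd.deriv]
      rcases eq_or_lt_of_le hμ.1 with hm0 | hm0
      · rw [← hm0]; simpa using hRL'' x hx
      · have t1 : μ * h1 x < 0 := mul_neg_of_pos_of_neg hm0 (hRH'' x hx)
        have t2 : (1 - μ) * g1 x ≤ 0 := by nlinarith [hμ.2, (hRL'' x hx).le]
        linarith
  have hpm : ∀ q ∈ Set.Icc pLs pHs, p (m q) = q := fun q hq => by
    have hq0 := hm01 q hq
    have e1 := heq _ hq0
    have e2 : (1 - m q) * g q + m q * h q = 0 := by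
      have h2' := hgmh q hq
      have e3 : m q = g q / (g q - h q) := rfl
      have hne : g q - h q ≠ 0 := h2'.ne
      rw [e3]
      field_simp
      ring
    exact (hFanti _ hq0).injOn (hIccI (hppt _ hq0)) (hIccI hq) (e1.trans e2.symm)
  have hp0 : p 0 = pLs := by
    have hm0 : m pLs = 0 := by show g pLs / (g pLs - h pLs) = 0; simp [hRL']
    have := hpm pLs ⟨le_refl _, hlt.le⟩
    rwa [hm0] at this
  have hp1 : p 1 = pHs := by
    have hm1 : m pHs = 1 := by
      have := hgneg pHs ⟨hlt.le, le_refl _⟩ hlt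
      show g pHs / (g pHs - h pHs) = 1
      rw [hRH', sub_zero]
      exact div_self this.ne
    have := hpm pHs ⟨hlt.le, le_refl _⟩
    rwa [hm1] at this
  have hpIoo : ∀ μ ∈ Set.Ioo (0:ℝ) 1, p μ ∈ Set.Ioo pLs pHs := fun μ hμ => by
    have hμ' : μ ∈ Set.Icc (0:ℝ) 1 := ⟨hμ.1.le, hμ.2.le⟩
    have hq := hppt μ hμ'
    have e := heq μ hμ'
    constructor
    · rcases eq_or_lt_of_le hq.1 with h0 | h0
      · exfalso
        rw [← h0] at e
        rw [hRL'] at e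
        have := hhpos pLs ⟨le_refl _, hlt.le⟩ hlt
        nlinarith [hμ.1]
      · exact h0
    · rcases eq_or_lt_of_le hq.2 with h0 | h0
      · exfalso
        rw [h0, hRH'] at e
        have := hgneg pHs ⟨hlt.le, le_refl _⟩ hlt
        nlinarith [hμ.2]
      · exact h0
  -- derivative of m
  have hmM1 : ∀ q ∈ Set.Icc pLs pHs, HasDerivAt m (M1 q) q := fun q hq => by
    have hqI := hIccI hq
    have hd := (hgd q hqI).div ((hgd q hqI).sub (hhd q hqI)) (hgmh q hq).ne
    exact hd.congr_deriv (by simp only [hM1def, Pi.sub_apply]; ring)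
  have hM1pos : ∀ q ∈ Set.Icc pLs pHs, 0 < M1 q := fun q hq => by
    have hqI := hIccI hq
    have hg1q := hRL'' q hqI
    have hh1q := hRH'' q hqI
    have hden : (0:ℝ) < (g q - h q) ^ 2 := by nlinarith [hgmh q hq]
    have hnum : 0 < g q * h1 q - g1 q * h q := by
      rcases eq_or_lt_of_le hq.1 with h0 | h0
      · have hh' := hhpos q hq (h0 ▸ hlt)
        have hgq : g q = 0 := by rw [← h0]; exact hRL'
        rw [hgq]
        nlinarith [mul_pos (neg_pos.2 hg1q) hh']
      · have hg' := hgneg q hq h0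
        have hh' := hhge q hq
        nlinarith [mul_pos_of_neg_of_neg hg' hh1q, mul_nonneg (neg_nonneg.2 hg1q.le) hh']
    show 0 < (g q * h1 q - g1 q * h q) / (g q - h q) ^ 2
    exact div_pos hnum hden
  have hmmono : StrictMonoOn m (Set.Icc pLs pHs) := by
    apply strictMonoOn_of_deriv_pos (convex_Icc _ _)
      (fun q hq => (hmM1 q hq).continuousAt.continuousWithinAt)
    intro x hx
    rw [interior_Icc] at hx
    rw [(hmM1 x (Set.Ioo_subset_Icc_self hx)).deriv]
    exact hM1pos x (Set.Ioo_subset_Icc_self hx)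
  have hpmono : StrictMonoOn p (Set.Icc (0:ℝ) 1) := by
    intro a ha b hb hab
    rcases lt_trichotomy (p a) (p b) with h' | h' | h'
    · exact h'
    · exfalso
      have := hmp a ha
      rw [h', hmp b hb] at this
      exact absurd this hab.ne'
    · exfalso
      have := hmmono (hppt b hb) (hppt a ha) h'
      rw [hmp a ha, hmp b hb] at this
      exact absurd this hab.asymm
  have hpcontAt : ∀ μ ∈ Set.Ioo (0:ℝ) 1, ContinuousAt p μ := fun μ hμ => by
    apply hpmono.continuousAt_of_image_mem_nhds (Icc_mem_nhds hμ.1 hμ.2)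
    have himg : Set.Icc pLs pHs ⊆ p '' Set.Icc (0:ℝ) 1 := fun q hq =>
      ⟨m q, hm01 q hq, hpm q hq⟩
    have := hpIoo μ hμ
    exact Filter.mem_of_superset (Icc_mem_nhds this.1 this.2) himg
  have hpcont : ContinuousOn p (Set.Icc (0:ℝ) 1) := by
    intro a ha
    rcases eq_or_lt_of_le ha.1 with h0 | h0
    · subst h0
      have key : ContinuousWithinAt p (Set.Ici (0:ℝ)) 0 := by
        apply hpmono.continuousWithinAt_right_of_exists_between
          (Icc_mem_nhdsGE one_pos)
        intro b hb
        rw [hp0] at hb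
        refine ⟨m (min b pHs), hm01 _ ⟨le_min hb.le hlt.le, min_le_right _ _⟩, ?_⟩
        rw [hpm _ ⟨le_min hb.le hlt.le, min_le_right _ _⟩, hp0]
        exact ⟨lt_min hb hlt, min_le_left _ _⟩
      exact key.mono Set.Icc_subset_Ici_self
    rcases eq_or_lt_of_le ha.2 with h1 | h1
    · subst h1
      have key : ContinuousWithinAt p (Set.Iic (1:ℝ)) 1 := by
        apply hpmono.continuousWithinAt_left_of_exists_between
          (Icc_mem_nhdsLE one_pos)
        intro b hb
        rw [hp1] at hb
        refine ⟨m (max b pLs), hm01 _ ⟨le_max_right _ _, max_le hb.le hlt.le⟩, ?_⟩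
        rw [hpm _ ⟨le_max_right _ _, max_le hb.le hlt.le⟩, hp1]
        exact ⟨le_max_left _ _, max_lt hb hlt⟩
      exact key.mono Set.Icc_subset_Iic_self
    · exact (hpcontAt a ⟨h0, h1⟩).continuousWithinAt
  -- derivative of p
  have hpd : ∀ μ ∈ Set.Ioo (0:ℝ) 1, HasDerivAt p (M1 (p μ))⁻¹ μ := fun μ hμ => by
    have hq := hpIoo μ hμ
    refine HasDerivAt.of_local_left_inverse (hpcontAt μ hμ)
      (hmM1 _ (Set.Ioo_subset_Icc_self hq)) (hM1pos _ (Set.Ioo_subset_Icc_self hq)).ne' ?_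
    filter_upwards [Ioo_mem_nhds hμ.1 hμ.2] with y hy using
      hmp y ⟨hy.1.le, hy.2.le⟩
  have hderiv : ∀ μ ∈ Set.Ioo (0:ℝ) 1, deriv p μ = (M1 (p μ))⁻¹ :=
    fun μ hμ => (hpd μ hμ).deriv
  -- derivative of M1
  set K2 : ℝ → ℝ := fun q =>
    ((g q * h2 q - g2 q * h q) * (g q - h q) ^ 2 -
        (g q * h1 q - g1 q * h q) * (2 * (g q - h q) * (g1 q - h1 q))) /
      ((g q - h q) ^ 2) ^ 2 with hK2def
  have hM1d : ∀ q ∈ Set.Icc pLs pHs, HasDerivAt M1 (K2 q) q := fun q hq => by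
    have hqI := hIccI hq
    have hnum : HasDerivAt (fun x => g x * h1 x - g1 x * h x)
        (g q * h2 q - g2 q * h q) q := by
      have hd := ((hgd q hqI).mul (hh1d q hqI)).sub ((hg1d q hqI).mul (hhd q hqI))
      refine hd.congr_deriv ?_
      ring
    have hden : HasDerivAt (fun x => (g x - h x) ^ 2)
        (2 * (g q - h q) * (g1 q - h1 q)) q := by
      have hd := ((hgd q hqI).sub (hhd q hqI)).pow 2
      refine hd.congr_deriv ?_
      simp only [Pi.sub_apply]
      ring
    have hden0 : (g q - h q) ^ 2 ≠ 0 := pow_ne_zero 2 (hgmh q hq).ne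
    exact hnum.div hden hden0
  -- second derivative formula
  have hsecond : ∀ μ ∈ Set.Ioo (0:ℝ) 1,
      DifferentiableAt ℝ (deriv p) μ ∧
        deriv (deriv p) μ = -(K2 (p μ) * (M1 (p μ))⁻¹) / (M1 (p μ)) ^ 2 := fun μ hμ => by
    have hq := hpIoo μ hμ
    have hqIcc := Set.Ioo_subset_Icc_self hq
    have hcomp : HasDerivAt (fun μ' => M1 (p μ')) (K2 (p μ) * (M1 (p μ))⁻¹) μ :=
      (hM1d _ hqIcc).comp μ (hpd μ hμ)
    have hφ : HasDerivAt (fun μ' => (M1 (p μ'))⁻¹)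
        (-(K2 (p μ) * (M1 (p μ))⁻¹) / (M1 (p μ)) ^ 2) μ :=
      hcomp.inv (hM1pos _ hqIcc).ne'
    have hev : deriv p =ᶠ[nhds μ] fun μ' => (M1 (p μ'))⁻¹ := by
      filter_upwards [Ioo_mem_nhds hμ.1 hμ.2] with y hy using hderiv y hy
    constructor
    · exact (Filter.EventuallyEq.differentiableAt_iff hev).2 hφ.differentiableAt
    · rw [hev.deriv_eq]
      exact hφ.deriv
  -- pointwise facts at q = p μ for sign reasoning
  have hfacts : ∀ μ ∈ Set.Ioo (0:ℝ) 1,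
      g (p μ) < 0 ∧ 0 < h (p μ) ∧ g1 (p μ) < 0 ∧ h1 (p μ) < 0 ∧
        g (p μ) - h (p μ) < 0 ∧ 0 < M1 (p μ) := fun μ hμ => by
    have hq := hpIoo μ hμ
    have hqIcc := Set.Ioo_subset_Icc_self hq
    have hqI := hIccI hqIcc
    exact ⟨hgneg _ hqIcc hq.1, hhpos _ hqIcc hq.2, hRL'' _ hqI, hRH'' _ hqI,
      hgmh _ hqIcc, hM1pos _ hqIcc⟩
  have hiter : ∀ x : ℝ, deriv^[2] p x = deriv (deriv p) x := fun x => by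
    rw [Function.iterate_succ_apply', Function.iterate_one]
  constructor
  · -- convex case
    intro hc
    have key : ∀ μ ∈ Set.Ioo (0:ℝ) 1, 0 ≤ deriv (deriv p) μ := fun μ hμ => by
      obtain ⟨-, heq2⟩ := hsecond μ hμ
      obtain ⟨hgq, hhq, hg1q, hh1q, hgh, hM1q⟩ := hfacts μ hμ
      obtain ⟨hg2q, hh2q, hg1h1⟩ := hc _ (hpIoo μ hμ)
      rw [heq2]
      have hK2np : K2 (p μ) ≤ 0 := by
        show ((g (p μ) * h2 (p μ) - g2 (p μ) * h (p μ)) * (g (p μ) - h (p μ)) ^ 2 -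
          (g (p μ) * h1 (p μ) - g1 (p μ) * h (p μ)) *
            (2 * (g (p μ) - h (p μ)) * (g1 (p μ) - h1 (p μ)))) /
          ((g (p μ) - h (p μ)) ^ 2) ^ 2 ≤ 0
        apply div_nonpos_of_nonpos_of_nonneg _ (by positivity)
        have hA : g (p μ) * h2 (p μ) - g2 (p μ) * h (p μ) ≤ 0 := by
          have t1 : g (p μ) * h2 (p μ) ≤ 0 :=
            mul_nonpos_of_nonpos_of_nonneg hgq.le hh2q
          have t2 : 0 ≤ g2 (p μ) * h (p μ) := mul_nonneg hg2q hhq.le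
          linarith
        have hB : 0 < g (p μ) * h1 (p μ) - g1 (p μ) * h (p μ) := by
          have t1 : 0 < g (p μ) * h1 (p μ) := mul_pos_of_neg_of_neg hgq hh1q
          have t2 : g1 (p μ) * h (p μ) < 0 := mul_neg_of_neg_of_pos hg1q hhq
          linarith
        have hE : g1 (p μ) - h1 (p μ) ≤ 0 := by linarith
        have t3 : (g (p μ) * h2 (p μ) - g2 (p μ) * h (p μ)) * (g (p μ) - h (p μ)) ^ 2 ≤ 0 :=
          mul_nonpos_of_nonpos_of_nonneg hA (sq_nonneg _)
        have t5 : 0 ≤ (g (p μ) - h (p μ)) * (g1 (p μ) - h1 (p μ)) := by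
          nlinarith [mul_nonneg (neg_nonneg.2 hgh.le) (neg_nonneg.2 hE)]
        nlinarith [t3, mul_nonneg hB.le t5]
      have : K2 (p μ) * (M1 (p μ))⁻¹ ≤ 0 :=
        mul_nonpos_of_nonpos_of_nonneg hK2np (inv_nonneg.2 hM1q.le)
      exact div_nonneg (neg_nonneg.2 this) (sq_nonneg _)
    refine ⟨key, ?_⟩
    apply convexOn_of_deriv2_nonneg (convex_Icc _ _) hpcont
    · intro x hx
      rw [interior_Icc] at hx
      exact (hpd x hx).differentiableAt.differentiableWithinAt
    · intro x hx
      rw [interior_Icc] at hx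
      exact (hsecond x hx).1.differentiableWithinAt
    · intro x hx
      rw [interior_Icc] at hx
      rw [hiter]
      exact key x hx
  · -- concave case
    intro hc
    have key : ∀ μ ∈ Set.Ioo (0:ℝ) 1, deriv (deriv p) μ ≤ 0 := fun μ hμ => by
      obtain ⟨-, heq2⟩ := hsecond μ hμ
      obtain ⟨hgq, hhq, hg1q, hh1q, hgh, hM1q⟩ := hfacts μ hμ
      obtain ⟨hg2q, hh2q, hg1h1⟩ := hc _ (hpIoo μ hμ)
      rw [heq2]
      have hK2nn : 0 ≤ K2 (p μ) := by
        show 0 ≤ ((g (p μ) * h2 (p μ) - g2 (p μ) * h (p μ)) * (g (p μ) - h (p μ)) ^ 2 -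
          (g (p μ) * h1 (p μ) - g1 (p μ) * h (p μ)) *
            (2 * (g (p μ) - h (p μ)) * (g1 (p μ) - h1 (p μ)))) /
          ((g (p μ) - h (p μ)) ^ 2) ^ 2
        apply div_nonneg _ (by positivity)
        have hA : 0 ≤ g (p μ) * h2 (p μ) - g2 (p μ) * h (p μ) := by
          have t1 : 0 ≤ g (p μ) * h2 (p μ) := by
            nlinarith [mul_nonneg (neg_nonneg.2 hgq.le) (neg_nonneg.2 hh2q)]
          have t2 : g2 (p μ) * h (p μ) ≤ 0 :=
            mul_nonpos_of_nonpos_of_nonneg hg2q hhq.le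
          linarith
        have hB : 0 < g (p μ) * h1 (p μ) - g1 (p μ) * h (p μ) := by
          have t1 : 0 < g (p μ) * h1 (p μ) := mul_pos_of_neg_of_neg hgq hh1q
          have t2 : g1 (p μ) * h (p μ) < 0 := mul_neg_of_neg_of_pos hg1q hhq
          linarith
        have hE : 0 ≤ g1 (p μ) - h1 (p μ) := by linarith
        have t3 : 0 ≤ (g (p μ) * h2 (p μ) - g2 (p μ) * h (p μ)) * (g (p μ) - h (p μ)) ^ 2 :=
          mul_nonneg hA (sq_nonneg _)
        have t5 : (g (p μ) - h (p μ)) * (g1 (p μ) - h1 (p μ)) ≤ 0 :=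
          mul_nonpos_of_nonpos_of_nonneg hgh.le hE
        nlinarith [t3, mul_nonpos_of_nonneg_of_nonpos hB.le t5]
      have : 0 ≤ K2 (p μ) * (M1 (p μ))⁻¹ :=
        mul_nonneg hK2nn (inv_nonneg.2 hM1q.le)
      exact div_nonpos_of_nonpos_of_nonneg (neg_nonpos.2 this) (sq_nonneg _)
    refine ⟨key, ?_⟩
    apply concaveOn_of_deriv2_nonpos (convex_Icc _ _) hpcont
    · intro x hx
      rw [interior_Icc] at hx
      exact (hpd x hx).differentiableAt.differentiableWithinAt
    · intro x hx
      rw [interior_Icc] at hx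
      exact (hsecond x hx).1.differentiableWithinAt
    · intro x hx
      rw [interior_Icc] at hx
      rw [hiter]
      exact key x hx
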